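/- Define E(n) in tCH2 by E(n) = sum over T in RV_{n;2} of sgn(T) * th_{val(T)}, where sgn(T) = 1 for height 0 and sgn((l,T1,T2,T3)) = sgn(val(T2)+1)*sgn(T1)*sgn(T2)*sgn(T3). Define terr(0,0) = th_2, terr(0,1) = th_1, terr(n+1,0) = (terr(n,0)^2 - terr(n,1)^2)*terr(n,0), terr(n+1,1) = (2*terr(n,0)^2 - th_1*terr(n,1)*terr(n,0))*terr(n,1). Then for every n >= 0, terr(n,0) is congruent to E(n) modulo Ker(L), and terr(n,1) is congruent to S_{-1}(E(n)) modulo Ker(L), where S_{-1} is the linear shift operator th_i -> th_{i-1}. -/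

import Mathlib

def tau (i : ℤ) : ℤ := |i + 1| - 1

/-- Basis element `th_i` of the free ℤ-module `tCH2 = ℤ →₀ ℤ`. -/
noncomputable def th (i : ℤ) : ℤ →₀ ℤ := Finsupp.single i 1

/-- Product of basis elements of `tCH2`:
`th_{-1} th_j = 0`; `th_i th_j = ∑_{k=0}^i th_{j-i+2k}` for `i ≥ 0`;
`th_i th_j = -(th_{tau i} th_j)` for `i < -1` (note `tau i ≥ 0` there). -/
noncomputable def thMulB (i j : ℤ) : ℤ →₀ ℤ :=
  if i = -1 then 0
  else if 0 ≤ i then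
    ∑ k ∈ Finset.range (i.toNat + 1), Finsupp.single (j - i + 2 * (k : ℤ)) (1 : ℤ)
  else
    -(∑ k ∈ Finset.range ((tau i).toNat + 1),
        Finsupp.single (j - tau i + 2 * (k : ℤ)) (1 : ℤ))

/-- The bilinear extension of `thMulB` to all of `tCH2`. -/
noncomputable def tmul (x y : ℤ →₀ ℤ) : ℤ →₀ ℤ :=
  x.sum fun i a => y.sum fun j b => (a * b) • thMulB i j
/-- Plane ternary trees of height `n` with integer-labeled vertices. -/
inductive RVT : ℕ → Type
  | leaf (l : ℤ) : RVT 0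
  | node {n : ℕ} (l : ℤ) (T1 T2 T3 : RVT n) : RVT (n + 1)

/-- The value (root label) of a tree. -/
def RVT.val : ∀ {n : ℕ}, RVT n → ℤ
  | _, .leaf l => l
  | _, .node l _ _ _ => l

/-- The radius-value tree condition: all labels are even, and at each internal
vertex `(l, T1, T2, T3)` we have `|l - val T1 - val T3| ≤ tau (val T2)`. -/
def RVT.valid : ∀ {n : ℕ}, RVT n → Prop
  | _, .leaf l => Even l
  | _, .node l T1 T2 T3 =>
      Even l ∧ |l - T1.val - T3.val| ≤ tau T2.val ∧ T1.valid ∧ T2.valid ∧ T3.valid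

/-- Every leaf is labeled `2`. -/
def RVT.leaves2 : ∀ {n : ℕ}, RVT n → Prop
  | _, .leaf l => l = 2
  | _, .node _ T1 T2 T3 => T1.leaves2 ∧ T2.leaves2 ∧ T3.leaves2

/-- Membership in `RV_{n;2}`. -/
def RVT.mem2 {n : ℕ} (T : RVT n) : Prop := T.valid ∧ T.leaves2

/-- The involution `Inv`. -/
def RVT.inv : ∀ {n : ℕ}, RVT n → RVT n
  | _, .leaf l => .leaf l
  | _, .node l T1 T2 T3 =>
      .node (T1.inv.val + T3.inv.val - (l - T1.val - T3.val)) T1.inv T2 T3.inv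

/-- Basis element `h_i` of the free ℤ-module `CH2 = ℕ →₀ ℤ`. -/
noncomputable def hb (i : ℕ) : ℕ →₀ ℤ := Finsupp.single i 1

/-- Product of basis elements of `CH2`: `h_i h_j = ∑_{k=0}^{min i j} h_{|j-i|+2k}`. -/
noncomputable def hMulB (i j : ℕ) : ℕ →₀ ℤ :=
  ∑ k ∈ Finset.range (min i j + 1), Finsupp.single (max i j - min i j + 2 * k) (1 : ℤ)

/-- The bilinear extension of `hMulB` to all of `CH2`. -/
noncomputable def hmul (x y : ℕ →₀ ℤ) : ℕ →₀ ℤ :=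
  x.sum fun i a => y.sum fun j b => (a * b) • hMulB i j

/-- The linear map `L : tCH2 → CH2`, `th_i ↦ sgn(i+1) • h_{tau i}`. -/
noncomputable def Lmap (x : ℤ →₀ ℤ) : ℕ →₀ ℤ :=
  x.sum fun i a => (a * (i + 1).sign) • Finsupp.single (tau i).toNat (1 : ℤ)

/-- The sign of a radius-value tree. -/
def RVT.sgn : ∀ {n : ℕ}, RVT n → ℤ
  | _, .leaf _ => 1
  | _, .node _ T1 T2 T3 => (T2.val + 1).sign * T1.sgn * T2.sgn * T3.sgn

open scoped BigOperators in
/-- `E n = ∑_{T ∈ RV_{n;2}} sgn(T) • th_{val T}` in `tCH2`. -/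
noncomputable def E (n : ℕ) : ℤ →₀ ℤ :=
  ∑ᶠ T : {T : RVT n // T.mem2}, (T.1.sgn) • th T.1.val

/-- The shift operator `S_{-1} : th_i ↦ th_{i-1}`. -/
noncomputable def Sm1 (x : ℤ →₀ ℤ) : ℤ →₀ ℤ := Finsupp.mapDomain (fun i => i - 1) x

/-- The pair `(terr(n,0), terr(n,1))` in `tCH2`. -/
noncomputable def terr : ℕ → (ℤ →₀ ℤ) × (ℤ →₀ ℤ)
  | 0 => (th 2, th 1)
  | n + 1 =>
      (tmul (tmul (terr n).1 (terr n).1 - tmul (terr n).2 (terr n).2) (terr n).1,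
       tmul (2 • tmul (terr n).1 (terr n).1 -
         tmul (th 1) (tmul (terr n).2 (terr n).1)) (terr n).2)


-- ===================== auxiliary development =====================

deriving instance DecidableEq for RVT

open Finset

namespace TErr

abbrev A : Type := AddMonoidAlgebra ℤ ℤ

noncomputable def sg (r : ℤ) : A := AddMonoidAlgebra.single r 1

lemma sg_mul (a b : ℤ) : sg a * sg b = sg (a + b) := by
  show AddMonoidAlgebra.single a 1 * AddMonoidAlgebra.single b 1 = AddMonoidAlgebra.single (a+b) 1
  rw [AddMonoidAlgebra.single_mul_single, one_mul]

lemma sg_zero : sg 0 = 1 := rfl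

lemma hzi : sg 1 * sg (-1) = 1 := by rw [sg_mul]; norm_num [sg_zero]

noncomputable def dd : A := sg 1 - sg (-1)

lemma dd_ne : dd ≠ 0 := by
  rw [dd, sub_ne_zero]
  intro h
  rcases AddMonoidAlgebra.single_inj.1 h with ⟨h1, _⟩ | ⟨h1, _⟩ <;> omega

lemma dd_mul_sg (r : ℤ) : dd * sg r = sg (r + 1) - sg (r - 1) := by
  rw [dd, sub_mul, sg_mul, sg_mul]; ring_nf

noncomputable def V (m : ℕ) : A := ∑ k ∈ range (m + 1), sg ((m : ℤ) - 2 * k)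

lemma dd_V (m : ℕ) : dd * V m = sg ((m : ℤ) + 1) - sg (-((m : ℤ) + 1)) := by
  rw [V, mul_sum]
  have : ∀ k ∈ range (m + 1), dd * sg ((m : ℤ) - 2 * k)
      = (fun k : ℕ => sg ((m : ℤ) + 1 - 2 * (k:ℤ))) k
        - (fun k : ℕ => sg ((m : ℤ) + 1 - 2 * (k:ℤ))) (k + 1) := by
    intro k _
    rw [dd_mul_sg]
    simp only
    congr 1 <;> congr 1 <;> push_cast <;> ring
  rw [sum_congr rfl this, Finset.sum_range_sub']
  congr 2 <;> push_cast <;> ring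

noncomputable def W (i : ℤ) : A := (i + 1).sign • V (tau i).toNat

lemma W_neg_one : W (-1) = 0 := by simp [W]

lemma W_nonneg {i : ℤ} (h : 0 ≤ i) : W i = V i.toNat := by
  rw [W]
  have h1 : (i + 1).sign = 1 := Int.sign_eq_one_iff_pos.2 (by omega)
  have h2 : (tau i).toNat = i.toNat := by rw [tau, abs_of_nonneg (by omega)]; omega
  rw [h1, h2, one_smul]

lemma W_neg {i : ℤ} (h : i < -1) : W i = -V (-i - 2).toNat := by
  rw [W]
  have h1 : (i + 1).sign = -1 := Int.sign_eq_neg_one_iff_neg.2 (by omega)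
  have h2 : tau i = -i - 2 := by rw [tau, abs_of_neg (by omega)]; omega
  rw [h1, h2, neg_smul, one_smul]

lemma dd_W (i : ℤ) : dd * W i = sg (i + 1) - sg (-(i + 1)) := by
  rcases lt_trichotomy i (-1) with h | h | h
  · rw [W_neg h, mul_neg, dd_V]
    have : ((-i - 2).toNat : ℤ) = -i - 2 := by omega
    rw [this]
    have e1 : -i - 2 + 1 = -(i + 1) := by ring
    rw [e1, neg_neg]; ring
  · subst h; rw [W_neg_one, mul_zero]; norm_num
  · have h0 : 0 ≤ i := by omega
    rw [W_nonneg h0, dd_V]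
    have : (i.toNat : ℤ) = i := by omega
    rw [this]

lemma W_one : W 1 = sg 1 + sg (-1) := by
  rw [W_nonneg (by norm_num)]
  show V 1 = _
  rw [V]
  rw [Finset.sum_range_succ, Finset.sum_range_one]
  norm_num

-- ## the embedding ψ of CH2 and the map Φ = ψ ∘ L on tCH2
noncomputable def psi : (ℕ →₀ ℤ) →ₗ[ℤ] A := Finsupp.linearCombination ℤ (fun m => V m)
noncomputable def Phi : (ℤ →₀ ℤ) →ₗ[ℤ] A := Finsupp.linearCombination ℤ W

lemma V_apply_lt {i n : ℕ} (h : i < n) : (V i).coeff ((n : ℤ)) = 0 := by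
  rw [V, AddMonoidAlgebra.coeff_sum, Finsupp.finset_sum_apply]
  apply Finset.sum_eq_zero
  intro k _
  rw [sg, AddMonoidAlgebra.coeff_single, Finsupp.single_apply, if_neg (by omega)]

lemma V_apply_self (n : ℕ) : (V n).coeff ((n : ℤ)) = 1 := by
  rw [V, AddMonoidAlgebra.coeff_sum, Finsupp.finset_sum_apply]
  rw [Finset.sum_eq_single 0]
  · rw [sg, AddMonoidAlgebra.coeff_single, Finsupp.single_apply, if_pos (by omega)]
  · intro k _ hk
    rw [sg, AddMonoidAlgebra.coeff_single, Finsupp.single_apply, if_neg (by omega)]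
  · intro h; exact absurd (mem_range.2 (Nat.succ_pos n)) h

lemma psi_inj : Function.Injective psi := by
  rw [injective_iff_map_eq_zero]
  intro x hx
  by_contra hne
  have hsupp : x.support.Nonempty := Finsupp.support_nonempty_iff.2 hne
  set n := x.support.max' hsupp with hn
  have hxn : x n ≠ 0 := Finsupp.mem_support_iff.1 (x.support.max'_mem hsupp)
  have key : (psi x).coeff ((n : ℤ)) = x n := by
    rw [psi, Finsupp.linearCombination_apply, Finsupp.sum, AddMonoidAlgebra.coeff_sum,
      Finsupp.finset_sum_apply]
    rw [Finset.sum_eq_single n]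
    · rw [AddMonoidAlgebra.coeff_smul, Finsupp.smul_apply, V_apply_self, smul_eq_mul, mul_one]
    · intro i hi hine
      have : i < n := lt_of_le_of_ne (x.support.le_max' i hi) hine
      rw [AddMonoidAlgebra.coeff_smul, Finsupp.smul_apply, V_apply_lt this, smul_eq_mul, mul_zero]
    · intro h; exact absurd (x.support.max'_mem hsupp) h
  rw [hx] at key
  exact hxn (by simpa using key.symm)

lemma Phi_single (v : ℤ) (c : ℤ) : Phi (Finsupp.single v c) = c • W v :=
  Finsupp.linearCombination_single ℤ c v

lemma Phi_th (v : ℤ) : Phi (th v) = W v := by rw [th, Phi_single, one_smul]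

lemma psi_Lmap (x : ℤ →₀ ℤ) : psi (Lmap x) = Phi x := by
  induction x using Finsupp.induction_linear with
  | zero =>
    have : Lmap 0 = 0 := Finsupp.sum_zero_index
    rw [this, map_zero, map_zero]
  | add f g hf hg =>
    have : Lmap (f + g) = Lmap f + Lmap g := by
      rw [Lmap, Lmap, Lmap]
      exact Finsupp.sum_add_index' (fun a => by rw [zero_mul, zero_smul])
        (fun a b₁ b₂ => by rw [add_mul, add_smul])
    rw [this, map_add, map_add, hf, hg]
  | single i a =>
    have : Lmap (Finsupp.single i a) = (a * (i + 1).sign) • Finsupp.single (tau i).toNat (1:ℤ) :=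
      Finsupp.sum_single_index (by rw [zero_mul, zero_smul])
    rw [this, map_smul, Phi_single]
    have : psi (Finsupp.single (tau i).toNat (1:ℤ)) = V (tau i).toNat := by
      rw [psi, Finsupp.linearCombination_single, one_smul]
    rw [this, W, mul_smul]

lemma L_eq_of_Phi {x y : ℤ →₀ ℤ} (h : Phi x = Phi y) : Lmap x = Lmap y :=
  psi_inj (by rw [psi_Lmap, psi_Lmap, h])

-- pair
noncomputable def pr (s : ℤ) : A := sg s + sg (-s)

lemma dd_pair (r : ℤ) : dd * (sg r - sg (-r)) = pr (r + 1) - pr (r - 1) := by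
  rw [mul_sub, dd_mul_sg, dd_mul_sg, pr, pr]
  have e1 : -r + 1 = -(r - 1) := by ring
  have e2 : -r - 1 = -(r + 1) := by ring
  rw [e1, e2]; ring

lemma ddsq_ne : dd * dd ≠ 0 := mul_ne_zero dd_ne dd_ne

lemma PhiB_nonneg {i : ℤ} (j : ℤ) (h : 0 ≤ i) : Phi (thMulB i j) = W i * W j := by
  have hne : i ≠ -1 := by omega
  rw [thMulB, if_neg hne, if_pos h, map_sum]
  have hterm : ∀ k : ℕ, Phi (Finsupp.single (j - i + 2 * (k:ℤ)) (1:ℤ)) = W (j - i + 2 * k) := by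
    intro k; rw [Phi_single, one_smul]
  simp only [hterm]
  apply mul_left_cancel₀ ddsq_ne
  have lhs : dd * dd * ∑ k ∈ range (i.toNat + 1), W (j - i + 2 * (k:ℤ))
      = pr (i + j + 2) - pr (j - i) := by
    rw [mul_assoc, mul_sum, mul_sum]
    have : ∀ k ∈ range (i.toNat + 1), dd * (dd * W (j - i + 2 * (k:ℤ)))
        = (fun k : ℕ => pr (j - i + 2 * (k:ℤ))) (k+1) - (fun k : ℕ => pr (j - i + 2 * (k:ℤ))) k := by
      intro k _
      rw [dd_W, dd_pair]
      simp only
      congr 1 <;> congr 1 <;> push_cast <;> ring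
    rw [sum_congr rfl this,
      Finset.sum_range_sub (fun k : ℕ => pr (j - i + 2 * (k:ℤ))) (i.toNat + 1)]
    have hi : (i.toNat : ℤ) = i := by omega
    congr 2 <;> push_cast [hi] <;> ring
  rw [lhs]
  have rhs : dd * dd * (W i * W j) = (dd * W i) * (dd * W j) := by ring
  rw [rhs, dd_W, dd_W, pr, pr]
  have e1 : sg (i+1) * sg (j+1) = sg (i + j + 2) := by rw [sg_mul]; ring_nf
  have e2 : sg (i+1) * sg (-(j+1)) = sg (-(j - i)) := by rw [sg_mul]; ring_nf
  have e3 : sg (-(i+1)) * sg (j+1) = sg (j - i) := by rw [sg_mul]; ring_nf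
  have e4 : sg (-(i+1)) * sg (-(j+1)) = sg (-(i + j + 2)) := by rw [sg_mul]; ring_nf
  calc sg (i+j+2) + sg (-(i+j+2)) - (sg (j-i) + sg (-(j-i)))
      = sg (i+1) * sg (j+1) + sg (-(i+1)) * sg (-(j+1))
        - (sg (-(i+1)) * sg (j+1) + sg (i+1) * sg (-(j+1))) := by rw [e1, e2, e3, e4]
    _ = (sg (i + 1) - sg (-(i + 1))) * (sg (j + 1) - sg (-(j + 1))) := by ring

lemma tau_eq_of_neg {i : ℤ} (h : i < -1) : tau i = -i - 2 := by
  rw [tau, abs_of_neg (by omega)]; omega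

lemma thMulB_of_neg {i : ℤ} (j : ℤ) (h : i < -1) : thMulB i j = -thMulB (tau i) j := by
  have h1 : tau i = -i - 2 := tau_eq_of_neg h
  rw [thMulB, if_neg (by omega), if_neg (by omega)]
  rw [thMulB, if_neg (by omega), if_pos (by omega)]

lemma PhiB (i j : ℤ) : Phi (thMulB i j) = W i * W j := by
  rcases le_or_gt 0 i with h | h
  · exact PhiB_nonneg j h
  rcases eq_or_lt_of_le (show i ≤ -1 by omega) with h1 | h1
  · rw [h1, thMulB, if_pos rfl, map_zero, W_neg_one, zero_mul]
  · rw [thMulB_of_neg j h1, map_neg, PhiB_nonneg j (by rw [tau_eq_of_neg h1]; omega)]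
    have : W i = -W (tau i) := by
      rw [W_neg h1, W_nonneg (i := tau i) (by rw [tau_eq_of_neg h1]; omega), tau_eq_of_neg h1]
    rw [this]; ring

lemma Phi_tmul (x y : ℤ →₀ ℤ) : Phi (tmul x y) = Phi x * Phi y := by
  rw [tmul, Finsupp.sum, map_sum]
  have inner : ∀ i, Phi (y.sum fun j b => (x i * b) • thMulB i j)
      = ∑ j ∈ y.support, (x i * y j) • (W i * W j) := by
    intro i
    rw [Finsupp.sum, map_sum]
    exact Finset.sum_congr rfl fun j _ => by rw [map_smul, PhiB]
  simp only [inner]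
  rw [Phi, Finsupp.linearCombination_apply, Finsupp.linearCombination_apply,
    Finsupp.sum, Finsupp.sum, Finset.sum_mul_sum]
  refine Finset.sum_congr rfl fun i _ => Finset.sum_congr rfl fun j _ => ?_
  rw [smul_mul_smul_comm]

-- ## trees: the finset of all trees in `RV_{n;2}`

noncomputable def Lset (s t : ℤ) : Finset ℤ :=
  (Finset.range (t.toNat + 1)).image (fun k : ℕ => s - t + 2 * (k : ℤ))

lemma mem_Lset {s t l : ℤ} (ht : 0 ≤ t) :
    l ∈ Lset s t ↔ s - t ≤ l ∧ l ≤ s + t ∧ (l - s + t) % 2 = 0 := by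
  simp only [Lset, Finset.mem_image, Finset.mem_range]
  constructor
  · rintro ⟨k, hk, rfl⟩
    omega
  · rintro ⟨h1, h2, h3⟩
    exact ⟨((l - s + t) / 2).toNat, by omega, by omega⟩

noncomputable def allT : (n : ℕ) → Finset (RVT n)
  | 0 => {RVT.leaf 2}
  | n + 1 => ((allT n) ×ˢ ((allT n) ×ˢ (allT n))).biUnion
      (fun p => (Lset (p.1.val + p.2.2.val) (tau p.2.1.val)).image
        (fun l => RVT.node l p.1 p.2.1 p.2.2))

lemma mem2_even {n : ℕ} {T : RVT n} (h : T.mem2) : Even T.val := by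
  cases T with
  | leaf l => exact h.1
  | node l T1 T2 T3 => exact h.1.1

lemma tau_even_nonneg {b : ℤ} (hb : Even b) : 0 ≤ tau b ∧ tau b % 2 = 0 := by
  obtain ⟨r, hr⟩ := hb
  rcases abs_cases (b + 1) with ⟨h1, h2⟩ | ⟨h1, h2⟩ <;> (rw [tau]; omega)

lemma mem_allT : ∀ {n : ℕ} (T : RVT n), T ∈ allT n ↔ T.mem2 := by
  intro n
  induction n with
  | zero =>
    intro T
    cases T with
    | leaf l =>
      show RVT.leaf l ∈ ({RVT.leaf 2} : Finset (RVT 0)) ↔ _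
      rw [Finset.mem_singleton]
      constructor
      · intro h
        injection h with h'
        subst h'
        exact ⟨⟨1, rfl⟩, rfl⟩
      · rintro ⟨_, rfl⟩; rfl
  | succ n ih =>
    intro T
    cases T with
    | node l T1 T2 T3 =>
      show _ ∈ Finset.biUnion _ _ ↔ _
      rw [Finset.mem_biUnion]
      constructor
      · rintro ⟨⟨S1, S2, S3⟩, hp, hmem⟩
        rw [Finset.mem_product, Finset.mem_product] at hp
        obtain ⟨h1, h2, h3⟩ := hp
        dsimp only at h1 h2 h3
        rw [Finset.mem_image] at hmem
        obtain ⟨l', hl', heq⟩ := hmem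
        dsimp only at hl'
        injection heq with e0 e1 e2 e3 e4
        subst e1; subst e2; subst e3; subst e4
        rw [ih] at h1 h2 h3
        have hbe := tau_even_nonneg (mem2_even h2)
        rw [mem_Lset hbe.1] at hl'
        obtain ⟨ra, hra⟩ := mem2_even h1
        obtain ⟨rc, hrc⟩ := mem2_even h3
        dsimp only
        refine ⟨⟨?_, ?_, h1.1, h2.1, h3.1⟩, h1.2, h2.2, h3.2⟩
        · rw [Int.even_iff]; omega
        · rw [abs_le]; constructor <;> omega
      · rintro ⟨⟨hev, hbound, hv1, hv2, hv3⟩, hl1, hl2, hl3⟩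
        have h1 : T1.mem2 := ⟨hv1, hl1⟩
        have h2 : T2.mem2 := ⟨hv2, hl2⟩
        have h3 : T3.mem2 := ⟨hv3, hl3⟩
        refine ⟨(T1, T2, T3), ?_, ?_⟩
        · rw [Finset.mem_product, Finset.mem_product]
          exact ⟨(ih T1).2 h1, (ih T2).2 h2, (ih T3).2 h3⟩
        · rw [Finset.mem_image]
          refine ⟨l, ?_, rfl⟩
          have hbe := tau_even_nonneg (mem2_even h2)
          dsimp only
          rw [mem_Lset hbe.1]
          rw [abs_le] at hbound
          obtain ⟨ra, hra⟩ := mem2_even h1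
          obtain ⟨rc, hrc⟩ := mem2_even h3
          rw [Int.even_iff] at hev
          refine ⟨by omega, by omega, by omega⟩

lemma E_eq (n : ℕ) : E n = ∑ T ∈ allT n, T.sgn • th T.val := by
  have h1 : E n = ∑ᶠ (i : RVT n) (_ : i.mem2), i.sgn • th i.val :=
    finsum_subtype_eq_finsum_cond (f := fun T : RVT n => T.sgn • th T.val) RVT.mem2
  rw [h1]
  have : ∀ T : RVT n, T.mem2 = (T ∈ allT n) := fun T => propext (mem_allT T).symm
  simp only [this]
  exact finsum_mem_finset_eq_sum _ _

lemma E_zero : E 0 = th 2 := by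
  rw [E_eq]
  show ∑ T ∈ ({RVT.leaf 2} : Finset (RVT 0)), T.sgn • th T.val = th 2
  rw [Finset.sum_singleton]
  show (1 : ℤ) • th 2 = th 2
  rw [one_smul]

-- ## F and G generating sums

noncomputable def FF (n : ℕ) : A := ∑ T ∈ allT n, T.sgn • sg (T.val + 1)
noncomputable def GG (n : ℕ) : A := ∑ T ∈ allT n, T.sgn • sg (-(T.val + 1))

lemma Phi_E (n : ℕ) : Phi (E n) = ∑ T ∈ allT n, T.sgn • W T.val := by
  rw [E_eq, map_sum]
  exact Finset.sum_congr rfl fun T _ => by rw [map_smul, Phi_th]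

lemma Phi_Sm1_E (n : ℕ) : Phi (Sm1 (E n)) = ∑ T ∈ allT n, T.sgn • W (T.val - 1) := by
  rw [E_eq, Sm1, Finsupp.mapDomain_finset_sum, map_sum]
  refine Finset.sum_congr rfl fun T _ => ?_
  rw [Finsupp.mapDomain_smul, th, Finsupp.mapDomain_single, map_smul, Phi_single]
  rw [smul_smul, mul_one]

lemma dd_Phi_E (n : ℕ) : dd * Phi (E n) = FF n - GG n := by
  rw [Phi_E, mul_sum, FF, GG, ← Finset.sum_sub_distrib]
  refine Finset.sum_congr rfl fun T _ => ?_
  rw [mul_smul_comm, dd_W, smul_sub]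

lemma dd_Phi_Sm1_E (n : ℕ) :
    dd * Phi (Sm1 (E n)) = sg (-1) * FF n - sg 1 * GG n := by
  rw [Phi_Sm1_E, mul_sum, FF, GG, Finset.mul_sum, Finset.mul_sum, ← Finset.sum_sub_distrib]
  refine Finset.sum_congr rfl fun T _ => ?_
  rw [mul_smul_comm, dd_W]
  have e1 : T.val - 1 + 1 = T.val := by ring
  rw [e1, smul_sub, mul_smul_comm, mul_smul_comm, sg_mul, sg_mul]
  have e2 : -1 + (T.val + 1) = T.val := by ring
  have e3 : (1 : ℤ) + -(T.val + 1) = -T.val := by ring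
  rw [e2, e3]

-- ## the per-triple telescoping sums

lemma Lset_sum_sg (s t r : ℤ) (ht : 0 ≤ t) :
    ∑ l ∈ Lset s t, sg (l + r) = sg (s + r) * V t.toNat := by
  have htn : (t.toNat : ℤ) = t := by omega
  rw [Lset, Finset.sum_image (by intro a _ b _ h; dsimp only at h; omega)]
  rw [V, mul_sum]
  rw [← Finset.sum_range_reflect (fun k : ℕ => sg (s + r) * sg ((t.toNat : ℤ) - 2 * k)) (t.toNat + 1)]
  refine Finset.sum_congr rfl fun k hk => ?_
  rw [mem_range] at hk
  rw [sg_mul]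
  congr 1
  have h2 : ((t.toNat + 1 - 1 - k : ℕ) : ℤ) = t - k := by omega
  rw [h2]
  omega

lemma Lset_sum_sg_neg (s t r : ℤ) (ht : 0 ≤ t) :
    ∑ l ∈ Lset s t, sg (-(l + r)) = sg (-(s + r)) * V t.toNat := by
  have htn : (t.toNat : ℤ) = t := by omega
  rw [Lset, Finset.sum_image (by intro a _ b _ h; dsimp only at h; omega)]
  rw [V, mul_sum]
  refine Finset.sum_congr rfl fun k hk => ?_
  rw [sg_mul]
  congr 1
  omega

lemma triple_sum (a b c : ℤ) (hb : Even b) :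
    dd * ∑ l ∈ Lset (a + c) (tau b), ((b + 1).sign • W l)
    = (sg (a + c + 1) - sg (-(a + c + 1))) * W b := by
  have ht := (tau_even_nonneg hb).1
  rw [mul_sum]
  have : ∀ l ∈ Lset (a + c) (tau b), dd * ((b + 1).sign • W l)
      = (b + 1).sign • (sg (l + 1) - sg (-(l + 1))) := by
    intro l _
    rw [mul_smul_comm, dd_W]
  rw [sum_congr rfl this, ← Finset.smul_sum, Finset.sum_sub_distrib,
    Lset_sum_sg _ _ _ ht, Lset_sum_sg_neg _ _ _ ht, ← sub_mul, ← mul_smul_comm]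
  rfl

lemma Lset_sum_sg0 (s t : ℤ) (ht : 0 ≤ t) :
    ∑ l ∈ Lset s t, sg l = sg s * V t.toNat := by
  have := Lset_sum_sg s t 0 ht
  simpa using this

lemma Lset_sum_sg_neg0 (s t : ℤ) (ht : 0 ≤ t) :
    ∑ l ∈ Lset s t, sg (-l) = sg (-s) * V t.toNat := by
  have := Lset_sum_sg_neg s t 0 ht
  simpa using this

lemma triple_sum' (a b c : ℤ) (hb : Even b) :
    dd * ∑ l ∈ Lset (a + c) (tau b), ((b + 1).sign • W (l - 1))
    = (sg (a + c) - sg (-(a + c))) * W b := by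
  have ht := (tau_even_nonneg hb).1
  rw [mul_sum]
  have : ∀ l ∈ Lset (a + c) (tau b), dd * ((b + 1).sign • W (l - 1))
      = (b + 1).sign • (sg l - sg (-l)) := by
    intro l _
    rw [mul_smul_comm, dd_W]
    have e1 : l - 1 + 1 = l := by ring
    rw [e1]
  rw [sum_congr rfl this, ← Finset.smul_sum, Finset.sum_sub_distrib,
    Lset_sum_sg0 _ _ ht, Lset_sum_sg_neg0 _ _ ht, ← sub_mul, ← mul_smul_comm]
  rfl


-- ## the recursion step

lemma allT_succ (n : ℕ) : allT (n+1) = ((allT n) ×ˢ ((allT n) ×ˢ (allT n))).biUnion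
    (fun p => (Lset (p.1.val + p.2.2.val) (tau p.2.1.val)).image
      (fun l => RVT.node l p.1 p.2.1 p.2.2)) := rfl

lemma disj (n : ℕ) : ((((allT n) ×ˢ ((allT n) ×ˢ (allT n))) : Finset _) :
    Set (RVT n × (RVT n × RVT n))).PairwiseDisjoint
    (fun p : RVT n × (RVT n × RVT n) => (Lset (p.1.val + p.2.2.val) (tau p.2.1.val)).image
      (fun l => RVT.node l p.1 p.2.1 p.2.2)) := by
  intro p _ q _ hpq
  refine Finset.disjoint_left.2 ?_
  intro x hx hx'
  rw [Finset.mem_image] at hx hx'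
  obtain ⟨l, _, rfl⟩ := hx
  obtain ⟨l', _, h⟩ := hx'
  injection h with e0 e1 e2 e3 e4
  apply hpq
  rw [Prod.ext_iff]
  refine ⟨e2.symm, ?_⟩
  rw [Prod.ext_iff]
  exact ⟨e3.symm, e4.symm⟩

lemma hD (n : ℕ) : sg (-1) * (FF n * FF n) - sg 1 * (GG n * GG n)
    = ∑ T1 ∈ allT n, ∑ T3 ∈ allT n, (T1.sgn * T3.sgn) •
        (sg (T1.val + T3.val + 1) - sg (-(T1.val + T3.val + 1))) := by
  rw [FF, GG, Finset.sum_mul_sum, Finset.sum_mul_sum, Finset.mul_sum, Finset.mul_sum,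
    ← Finset.sum_sub_distrib]
  refine Finset.sum_congr rfl fun T1 _ => ?_
  rw [Finset.mul_sum, Finset.mul_sum, ← Finset.sum_sub_distrib]
  refine Finset.sum_congr rfl fun T3 _ => ?_
  have eA : sg (-1) * (sg (T1.val+1) * sg (T3.val+1)) = sg (T1.val + T3.val + 1) := by
    rw [sg_mul, sg_mul]; congr 1; ring
  have eB : sg 1 * (sg (-(T1.val+1)) * sg (-(T3.val+1))) = sg (-(T1.val + T3.val + 1)) := by
    rw [sg_mul, sg_mul]; congr 1; ring
  rw [smul_mul_smul_comm, smul_mul_smul_comm, mul_smul_comm, mul_smul_comm, eA, eB, ← smul_sub]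

lemma hD' (n : ℕ) : sg (-2) * (FF n * FF n) - sg 2 * (GG n * GG n)
    = ∑ T1 ∈ allT n, ∑ T3 ∈ allT n, (T1.sgn * T3.sgn) •
        (sg (T1.val + T3.val) - sg (-(T1.val + T3.val))) := by
  rw [FF, GG, Finset.sum_mul_sum, Finset.sum_mul_sum, Finset.mul_sum, Finset.mul_sum,
    ← Finset.sum_sub_distrib]
  refine Finset.sum_congr rfl fun T1 _ => ?_
  rw [Finset.mul_sum, Finset.mul_sum, ← Finset.sum_sub_distrib]
  refine Finset.sum_congr rfl fun T3 _ => ?_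
  have eA : sg (-2) * (sg (T1.val+1) * sg (T3.val+1)) = sg (T1.val + T3.val) := by
    rw [sg_mul, sg_mul]; congr 1; ring
  have eB : sg 2 * (sg (-(T1.val+1)) * sg (-(T3.val+1))) = sg (-(T1.val + T3.val)) := by
    rw [sg_mul, sg_mul]; congr 1; ring
  rw [smul_mul_smul_comm, smul_mul_smul_comm, mul_smul_comm, mul_smul_comm, eA, eB, ← smul_sub]

lemma dd_Phi_E_succ (n : ℕ) :
    dd * Phi (E (n+1)) = Phi (E n) * (sg (-1) * (FF n * FF n) - sg 1 * (GG n * GG n)) := by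
  rw [Phi_E, allT_succ, Finset.sum_biUnion (disj n), mul_sum]
  have hstep : ∀ p ∈ (allT n) ×ˢ ((allT n) ×ˢ (allT n)),
      dd * ∑ T ∈ (Lset (p.1.val + p.2.2.val) (tau p.2.1.val)).image
          (fun l => RVT.node l p.1 p.2.1 p.2.2), T.sgn • W T.val
      = (p.1.sgn * p.2.1.sgn * p.2.2.sgn) •
          ((sg (p.1.val + p.2.2.val + 1) - sg (-(p.1.val + p.2.2.val + 1))) * W p.2.1.val) := by
    rintro ⟨T1, T2, T3⟩ hp
    rw [Finset.mem_product, Finset.mem_product] at hp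
    dsimp only at hp ⊢
    obtain ⟨h1, h2, h3⟩ := hp
    rw [Finset.sum_image (by intro a _ b _ h; injection h)]
    have hsgn : ∀ l : ℤ, (RVT.node l T1 T2 T3).sgn • W ((RVT.node l T1 T2 T3).val)
        = (T1.sgn * T2.sgn * T3.sgn) • ((T2.val + 1).sign • W l) := by
      intro l
      show ((T2.val + 1).sign * T1.sgn * T2.sgn * T3.sgn) • W l = _
      rw [smul_smul]
      congr 1
      ring
    simp only [hsgn]
    rw [← Finset.smul_sum, mul_smul_comm,
      triple_sum T1.val T2.val T3.val (mem2_even ((mem_allT T2).1 h2))]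
  rw [Finset.sum_congr rfl hstep, hD n, Phi_E]
  conv_rhs => rw [Finset.sum_mul_sum]
  conv_rhs => rw [Finset.sum_comm]
  rw [Finset.sum_product]
  refine Finset.sum_congr rfl fun T1 _ => ?_
  rw [Finset.sum_product]
  refine Finset.sum_congr rfl fun T2 _ => ?_
  dsimp only
  rw [Finset.mul_sum]
  refine Finset.sum_congr rfl fun T3 _ => ?_
  rw [smul_mul_smul_comm]
  congr 1
  · ring
  · ring

lemma dd_Phi_Sm1_E_succ (n : ℕ) :
    dd * Phi (Sm1 (E (n+1))) = Phi (E n) * (sg (-2) * (FF n * FF n) - sg 2 * (GG n * GG n)) := by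
  rw [Phi_Sm1_E, allT_succ, Finset.sum_biUnion (disj n), mul_sum]
  have hstep : ∀ p ∈ (allT n) ×ˢ ((allT n) ×ˢ (allT n)),
      dd * ∑ T ∈ (Lset (p.1.val + p.2.2.val) (tau p.2.1.val)).image
          (fun l => RVT.node l p.1 p.2.1 p.2.2), T.sgn • W (T.val - 1)
      = (p.1.sgn * p.2.1.sgn * p.2.2.sgn) •
          ((sg (p.1.val + p.2.2.val) - sg (-(p.1.val + p.2.2.val))) * W p.2.1.val) := by
    rintro ⟨T1, T2, T3⟩ hp
    rw [Finset.mem_product, Finset.mem_product] at hp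
    dsimp only at hp ⊢
    obtain ⟨h1, h2, h3⟩ := hp
    rw [Finset.sum_image (by intro a _ b _ h; injection h)]
    have hsgn : ∀ l : ℤ, (RVT.node l T1 T2 T3).sgn • W ((RVT.node l T1 T2 T3).val - 1)
        = (T1.sgn * T2.sgn * T3.sgn) • ((T2.val + 1).sign • W (l - 1)) := by
      intro l
      show ((T2.val + 1).sign * T1.sgn * T2.sgn * T3.sgn) • W (l - 1) = _
      rw [smul_smul]
      congr 1
      ring
    simp only [hsgn]
    rw [← Finset.smul_sum, mul_smul_comm,
      triple_sum' T1.val T2.val T3.val (mem2_even ((mem_allT T2).1 h2))]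
  rw [Finset.sum_congr rfl hstep, hD' n, Phi_E]
  conv_rhs => rw [Finset.sum_mul_sum]
  conv_rhs => rw [Finset.sum_comm]
  rw [Finset.sum_product]
  refine Finset.sum_congr rfl fun T1 _ => ?_
  rw [Finset.sum_product]
  refine Finset.sum_congr rfl fun T2 _ => ?_
  dsimp only
  rw [Finset.mul_sum]
  refine Finset.sum_congr rfl fun T3 _ => ?_
  rw [smul_mul_smul_comm]
  congr 1
  · ring
  · ring

end TErr

theorem terr_congr_E (n : ℕ) :
    Lmap ((terr n).1) = Lmap (E n) ∧ Lmap ((terr n).2) = Lmap (Sm1 (E n)) := by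
  open TErr in
  suffices h : Phi ((terr n).1) = Phi (E n) ∧ Phi ((terr n).2) = Phi (Sm1 (E n)) from
    ⟨L_eq_of_Phi h.1, L_eq_of_Phi h.2⟩
  induction n with
  | zero =>
    constructor
    · show Phi (th 2) = Phi (E 0)
      rw [E_zero]
    · show Phi (th 1) = Phi (Sm1 (E 0))
      rw [E_zero, Sm1, th, th, Finsupp.mapDomain_single]
      norm_num
  | succ n ih =>
    obtain ⟨ih1, ih2⟩ := ih
    have hP := dd_Phi_E n
    have hQ := dd_Phi_Sm1_E n
    have hd3 : dd * (dd * dd) ≠ 0 := mul_ne_zero dd_ne ddsq_ne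
    constructor
    · have ht : (terr (n+1)).1
          = tmul (tmul (terr n).1 (terr n).1 - tmul (terr n).2 (terr n).2) (terr n).1 := rfl
      rw [ht, Phi_tmul, map_sub, Phi_tmul, Phi_tmul, ih1, ih2]
      apply mul_left_cancel₀ hd3
      have hE := dd_Phi_E_succ n
      calc dd * (dd * dd) *
            ((Phi (E n) * Phi (E n) - Phi (Sm1 (E n)) * Phi (Sm1 (E n))) * Phi (E n))
          = ((dd * Phi (E n)) * (dd * Phi (E n))
              - (dd * Phi (Sm1 (E n))) * (dd * Phi (Sm1 (E n)))) * (dd * Phi (E n)) := by ring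
        _ = ((FF n - GG n) * (FF n - GG n)
              - (sg (-1) * FF n - sg 1 * GG n) * (sg (-1) * FF n - sg 1 * GG n))
              * (FF n - GG n) := by rw [hP, hQ]
        _ = (FF n - GG n) *
              ((sg 1 - sg (-1)) * (sg (-1) * (FF n * FF n) - sg 1 * (GG n * GG n))) := by
            linear_combination (-(FF n - GG n)^3) * hzi
        _ = (dd * Phi (E n)) *
              (dd * (sg (-1) * (FF n * FF n) - sg 1 * (GG n * GG n))) := by
            rw [show sg 1 - sg (-1) = dd from rfl, ← hP]
        _ = dd * (dd * (Phi (E n) * (sg (-1) * (FF n * FF n) - sg 1 * (GG n * GG n)))) := by ring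
        _ = dd * (dd * (dd * Phi (E (n+1)))) := by rw [hE]
        _ = dd * (dd * dd) * Phi (E (n+1)) := by ring
    · have ht : (terr (n+1)).2
          = tmul (2 • tmul (terr n).1 (terr n).1
              - tmul (th 1) (tmul (terr n).2 (terr n).1)) (terr n).2 := rfl
      rw [ht, Phi_tmul, map_sub, map_nsmul, Phi_tmul, Phi_tmul, Phi_tmul, Phi_th, ih1, ih2,
        W_one]
      apply mul_left_cancel₀ hd3
      have hS := dd_Phi_Sm1_E_succ n
      calc dd * (dd * dd) *
            ((2 • (Phi (E n) * Phi (E n))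
              - (sg 1 + sg (-1)) * (Phi (Sm1 (E n)) * Phi (E n))) * Phi (Sm1 (E n)))
          = (2 • ((dd * Phi (E n)) * (dd * Phi (E n)))
              - (sg 1 + sg (-1)) * ((dd * Phi (Sm1 (E n))) * (dd * Phi (E n))))
              * (dd * Phi (Sm1 (E n))) := by ring
        _ = (2 • ((FF n - GG n) * (FF n - GG n))
              - (sg 1 + sg (-1)) * ((sg (-1) * FF n - sg 1 * GG n) * (FF n - GG n)))
              * (sg (-1) * FF n - sg 1 * GG n) := by rw [hP, hQ]
        _ = (FF n - GG n) *
              ((sg 1 - sg (-1)) * (sg (-2) * (FF n * FF n) - sg 2 * (GG n * GG n))) := by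
            rw [show sg (-2) = sg (-1) * sg (-1) by rw [sg_mul]; norm_num,
              show sg 2 = sg 1 * sg 1 by rw [sg_mul]; norm_num]
            linear_combination (2 * sg 1 * GG n ^ 3 - 2 * sg (-1) * FF n * GG n ^ 2
              - 4 * sg 1 * FF n * GG n ^ 2 + 4 * sg (-1) * FF n ^ 2 * GG n
              + 2 * sg 1 * FF n ^ 2 * GG n - 2 * sg (-1) * FF n ^ 3) * hzi
        _ = (dd * Phi (E n)) *
              (dd * (sg (-2) * (FF n * FF n) - sg 2 * (GG n * GG n))) := by
            rw [show sg 1 - sg (-1) = dd from rfl, ← hP]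
        _ = dd * (dd * (Phi (E n) * (sg (-2) * (FF n * FF n) - sg 2 * (GG n * GG n)))) := by ring
        _ = dd * (dd * (dd * Phi (Sm1 (E (n+1))))) := by rw [hS]
        _ = dd * (dd * dd) * Phi (Sm1 (E (n+1))) := by ring
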